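/- Fix a real c > 0 and for each integer n ≥ 1 set 𝒱*(n) = 4·sin²(π/(2n+4)) and 𝒞*(n) = (2/(n+2))·cot²(π/(2n+4)) − 1. Then lim_{n→∞} [2 − (2 − 𝒱*(n))·sinc(π/(c·𝒞*(n) + 1))] / 𝒱*(n) = 1 + π⁴/(192·c²), where sinc(x) = sin(x)/x. -/

import Mathlib

open Real Filter

/-- `sinc x = sin x / x` with `sinc 0 = 1`. -/
noncomputable def sinc (x : ℝ) : ℝ := if x = 0 then 1 else Real.sin x / x

/-- The unconstrained minimum variance `𝒱*(n) = 4 sin²(π/(2n+4))`. -/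
noncomputable def Vstar (n : ℕ) : ℝ := 4 * Real.sin (π / (2 * n + 4)) ^ 2

/-- The coherence of the optimal probe state,
`𝒞*(n) = (2/(n+2))·cot²(π/(2n+4)) − 1`. -/
noncomputable def Cstar (n : ℕ) : ℝ :=
  2 / ((n : ℝ) + 2) * Real.cot (π / (2 * n + 4)) ^ 2 - 1

lemma lim_sin_div : Tendsto (fun y : ℝ => Real.sin y / y) (nhdsWithin 0 {0}ᶜ) (nhds 1) := by
  have h := hasDerivAt_iff_tendsto_slope.mp (Real.hasDerivAt_sin 0)
  rw [Real.cos_zero] at h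
  refine h.congr fun y => ?_
  simp [slope_def_field, Real.sin_zero]

lemma lim_cube : Tendsto (fun y : ℝ => (y - Real.sin y) / y ^ 3) (nhdsWithin 0 {0}ᶜ)
    (nhds (1/6)) := by
  have hz : Tendsto (fun y : ℝ => (y - Real.sin y) / y ^ 3 - 1/6) (nhdsWithin 0 {0}ᶜ)
      (nhds 0) := by
    apply squeeze_zero_norm' (a := fun y : ℝ => |y| * (5/96))
    · have h1 : ∀ᶠ y : ℝ in nhdsWithin 0 {0}ᶜ, |y| ≤ 1 := by
        apply eventually_nhdsWithin_of_eventually_nhds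
        have h0 : ∀ᶠ y : ℝ in nhds 0, dist y 0 < 1 :=
          Metric.ball_mem_nhds 0 one_pos
        filter_upwards [h0] with y hy
        simpa [Real.dist_eq] using hy.le
      have h2 : ∀ᶠ y : ℝ in nhdsWithin 0 {0}ᶜ, y ≠ 0 := eventually_mem_nhdsWithin
      filter_upwards [h1, h2] with y hy1 hy2
      have hy3 : (0:ℝ) < |y| ^ 3 := by positivity
      have key : (y - Real.sin y) / y ^ 3 - 1/6 = -(Real.sin y - (y - y^3/6)) / y ^ 3 := by
        field_simp
        ring
      rw [key, Real.norm_eq_abs, abs_div, abs_neg, abs_pow, div_le_iff₀ hy3]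
      calc |Real.sin y - (y - y^3/6)| ≤ |y| ^ 4 * (5/96) := (Real.sin_bound hy1).trans (by
            have h4 : 0 ≤ |y| ^ 4 := by positivity
            nlinarith [mul_le_mul_of_nonneg_left hy1 h4, abs_nonneg y])
        _ = |y| * (5/96) * |y| ^ 3 := by ring
    · have : Tendsto (fun y : ℝ => |y|) (nhdsWithin 0 {0}ᶜ) (nhds 0) := by
        simpa using (continuous_abs.tendsto (0:ℝ)).mono_left nhdsWithin_le_nhds
      simpa using this.mul_const (5/96 : ℝ)
  have := hz.add (tendsto_const_nhds (x := (1/6 : ℝ)))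
  simpa using this

/-- The asymptotic normalized-variance curve of the twirled probe state at
coherence ratio `c`: `lim_n [2 − (2 − 𝒱*)·sinc(π/(c𝒞*+1))]/𝒱* = 1 + π⁴/(192c²)`. -/
theorem twirled_state_asymptotic_curve (c : ℝ) (hc : 0 < c) :
    Tendsto (fun n : ℕ =>
        (2 - (2 - Vstar n) * _root_.sinc (π / (c * Cstar n + 1))) / Vstar n)
      atTop (nhds (1 + π ^ 4 / (192 * c ^ 2))) := by
  set θ : ℕ → ℝ := fun n => π / (2 * n + 4) with hθdef
  have hden : ∀ n : ℕ, (0:ℝ) < 2 * n + 4 := by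
    intro n; positivity
  have hθpos : ∀ n, 0 < θ n := fun n => div_pos Real.pi_pos (hden n)
  have hθlt : ∀ n, θ n < π := by
    intro n
    rw [hθdef]
    calc π / (2 * (n:ℝ) + 4) ≤ π / 4 := by
          apply div_le_div_of_nonneg_left Real.pi_pos.le (by norm_num)
          nlinarith [Nat.cast_nonneg (α := ℝ) n]
      _ < π := by nlinarith [Real.pi_gt_three]
  have hsinpos : ∀ n, 0 < Real.sin (θ n) := fun n =>
    Real.sin_pos_of_pos_of_lt_pi (hθpos n) (hθlt n)
  have hθ0 : Tendsto θ atTop (nhds 0) := by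
    apply Tendsto.div_atTop (tendsto_const_nhds (x := π))
    apply tendsto_atTop_add_const_right
    exact (tendsto_natCast_atTop_atTop (R := ℝ)).const_mul_atTop (by norm_num)
  have hθne : Tendsto θ atTop (nhdsWithin 0 {0}ᶜ) := by
    rw [tendsto_nhdsWithin_iff]
    exact ⟨hθ0, Eventually.of_forall fun n => (hθpos n).ne'⟩
  -- θ / sin θ → 1
  have hK : Tendsto (fun n => θ n / Real.sin (θ n)) atTop (nhds 1) := by
    have := (lim_sin_div.comp hθne).inv₀ one_ne_zero
    simp only [Function.comp] at this
    simpa [inv_div] using this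
  -- θ cot θ → 1
  have hcot : Tendsto (fun n => θ n * Real.cot (θ n)) atTop (nhds 1) := by
    have hcos : Tendsto (fun n => Real.cos (θ n)) atTop (nhds 1) := by
      have := (Real.continuous_cos.tendsto 0).comp hθ0
      simpa [Function.comp_def] using this
    have := hK.mul hcos
    rw [show (1:ℝ) * 1 = 1 by norm_num] at this
    refine this.congr fun n => ?_
    rw [Real.cot_eq_cos_div_sin]
    field_simp
  -- θ(cC+1) → 4c/π
  have hD : Tendsto (fun n => θ n * (c * Cstar n + 1)) atTop (nhds (4 * c / π)) := by
    have hid : ∀ n, θ n * (c * Cstar n + 1)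
        = 4 * c / π * (θ n * Real.cot (θ n)) ^ 2 + (1 - c) * θ n := by
      intro n
      have h2 : ((n:ℝ) + 2) ≠ 0 := by positivity
      have h3 : (2 * (n:ℝ) + 4) ≠ 0 := (hden n).ne'
      simp only [Cstar, hθdef]
      field_simp
      ring
    have h1 : Tendsto (fun n => 4 * c / π * (θ n * Real.cot (θ n)) ^ 2 + (1 - c) * θ n)
        atTop (nhds (4 * c / π * 1 ^ 2 + (1 - c) * 0)) :=
      ((hcot.pow 2).const_mul _).add (hθ0.const_mul _)
    rw [show 4 * c / π * 1 ^ 2 + (1 - c) * 0 = 4 * c / π by ring] at h1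
    exact h1.congr fun n => (hid n).symm
  have h4cπ : (0:ℝ) < 4 * c / π := by positivity
  set x : ℕ → ℝ := fun n => π / (c * Cstar n + 1) with hxdef
  have hxθ : ∀ n, x n = π * θ n / (θ n * (c * Cstar n + 1)) := by
    intro n
    rw [hxdef, mul_comm π (θ n), mul_div_mul_left _ _ (hθpos n).ne']
  -- x → 0
  have hx0 : Tendsto x atTop (nhds 0) := by
    have := ((hθ0.const_mul π).div hD h4cπ.ne').congr fun n => (hxθ n).symm
    simpa using this
  -- x/θ → π²/(4c)
  have hxdθ : Tendsto (fun n => x n / θ n) atTop (nhds (π ^ 2 / (4 * c))) := by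
    have h1 : Tendsto (fun n => π / (θ n * (c * Cstar n + 1))) atTop
        (nhds (π / (4 * c / π))) := tendsto_const_nhds.div hD h4cπ.ne'
    have h2 : π / (4 * c / π) = π ^ 2 / (4 * c) := by
      field_simp
    rw [h2] at h1
    refine h1.congr fun n => ?_
    rw [hxθ n, div_div, mul_div_mul_right _ _ (hθpos n).ne']
  -- eventually x n > 0
  have hxpos : ∀ᶠ n in atTop, 0 < x n := by
    have h1 : ∀ᶠ n in atTop, 0 < θ n * (c * Cstar n + 1) :=
      hD.eventually (eventually_gt_nhds h4cπ)
    filter_upwards [h1] with n hn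
    have hC : 0 < c * Cstar n + 1 := by
      by_contra h
      push_neg at h
      nlinarith [hθpos n]
    exact div_pos Real.pi_pos hC
  have hxne : Tendsto x atTop (nhdsWithin 0 {0}ᶜ) := by
    rw [tendsto_nhdsWithin_iff]
    refine ⟨hx0, ?_⟩
    filter_upwards [hxpos] with n hn
    exact hn.ne'
  -- sinc (x n) → 1
  have hsinc : Tendsto (fun n => _root_.sinc (x n)) atTop (nhds 1) := by
    have h1 := lim_sin_div.comp hxne
    refine h1.congr' ?_
    filter_upwards [hxpos] with n hn
    simp [_root_.sinc, hn.ne', Function.comp]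
  -- second term
  have hT : Tendsto (fun n => 2 * (1 - _root_.sinc (x n)) / Vstar n) atTop
      (nhds (π ^ 4 / (192 * c ^ 2))) := by
    have hP : Tendsto (fun n => ((x n - Real.sin (x n)) / (x n) ^ 3)
          * ((x n / θ n) * (θ n / Real.sin (θ n))) ^ 2 * (1/2)) atTop
        (nhds ((1/6) * (π ^ 2 / (4 * c) * 1) ^ 2 * (1/2))) := by
      have h1 := lim_cube.comp hxne
      simp only [Function.comp_def] at h1
      exact (h1.mul ((hxdθ.mul hK).pow 2)).mul_const _
    have heq : (1/6 : ℝ) * (π ^ 2 / (4 * c) * 1) ^ 2 * (1/2) = π ^ 4 / (192 * c ^ 2) := by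
      field_simp
      ring
    rw [heq] at hP
    refine hP.congr' ?_
    filter_upwards [hxpos] with n hn
    have hVn : Vstar n = 4 * Real.sin (θ n) ^ 2 := rfl
    have hs := (hsinpos n).ne'
    have hθn := (hθpos n).ne'
    rw [hVn]
    simp only [_root_.sinc, hn.ne', if_false]
    field_simp
    ring
  have hsum := hsinc.add hT
  rw [show (1:ℝ) + π ^ 4 / (192 * c ^ 2) = 1 + π ^ 4 / (192 * c ^ 2) from rfl]
  refine hsum.congr fun n => ?_
  have hV : Vstar n ≠ 0 := by
    have := hsinpos n
    have : (0:ℝ) < 4 * Real.sin (θ n) ^ 2 := by positivity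
    exact this.ne'
  show _root_.sinc (x n) + 2 * (1 - _root_.sinc (x n)) / Vstar n
    = (2 - (2 - Vstar n) * _root_.sinc (x n)) / Vstar n
  field_simp
  ring
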